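/- Let q, a, b, x ∈ ℂ with 0 < |q| < 1, x ≠ 0, and let k, n ∈ ℕ with k ≤ n. Assume 1 - a q^j x ≠ 0 for 0 ≤ j ≤ k - 1 and 1 - b q^j x ≠ 0 for 0 ≤ j ≤ n + k - 1. Then the k-th iterate of the q-differential operator applied to the function t ↦ (a t;q)_n/(b t;q)_n, evaluated at x, equals ((a x;q)_n (q;q)_n / ((b x;q)_n (b q^n x;q)_k)) · ∑_{i=0}^{k} [k choose i]_q q^{C(i,2)} (-a)^i b^{k-i} (b x;q)_i (q^n;q)_{k-i} / ((q;q)_{n-i} (a x;q)_i). -/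

import Mathlib

/-- The finite q-shifted factorial (a;q)_n = ∏_{j=0}^{n-1} (1 - a q^j). -/
noncomputable def qPoch (q a : ℂ) (n : ℕ) : ℂ :=
  ∏ j ∈ Finset.range n, (1 - a * q ^ j)

/-- The q-binomial coefficient [n choose k]_q = (q;q)_n / ((q;q)_k (q;q)_{n-k}). -/
noncomputable def qBinom (q : ℂ) (n k : ℕ) : ℂ :=
  qPoch q q n / (qPoch q q k * qPoch q q (n - k))

/-- The q-differential operator: (D_q f)(x) = (f(x) - f(qx))/x. -/
noncomputable def Dq (q : ℂ) (f : ℂ → ℂ) : ℂ → ℂ :=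
  fun x => (f x - f (q * x)) / x

lemma qPoch_succ (q c : ℂ) (m : ℕ) : qPoch q c (m+1) = qPoch q c m * (1 - c * q^m) :=
  Finset.prod_range_succ _ _

lemma qPoch_succ' (q c : ℂ) (m : ℕ) : qPoch q c (m+1) = (1 - c) * qPoch q (c*q) m := by
  rw [qPoch, Finset.prod_range_succ']
  simp only [pow_zero, mul_one]
  rw [mul_comm, qPoch]
  congr 1
  exact Finset.prod_congr rfl (fun j _ => by ring)

lemma qPoch_add (q c : ℂ) (s t : ℕ) :
    qPoch q c (s+t) = qPoch q c s * qPoch q (c * q^s) t := by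
  induction t with
  | zero => simp [qPoch]
  | succ t ih => rw [← Nat.add_assoc, qPoch_succ, ih, qPoch_succ]; ring

lemma qPoch_ne_zero (q c : ℂ) (m : ℕ) (h : ∀ j < m, 1 - c * q^j ≠ 0) :
    qPoch q c m ≠ 0 :=
  Finset.prod_ne_zero_iff.mpr (fun j hj => h j (Finset.mem_range.mp hj))

lemma one_sub_qpow_ne (q : ℂ) (hq0 : 0 < ‖q‖) (hq1 : ‖q‖ < 1) (m : ℕ) :
    (1:ℂ) - q * q^m ≠ 0 := by
  intro h
  have h1 : q * q^m = 1 := by linear_combination -h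
  have h2 := congrArg (‖·‖) h1
  rw [norm_mul, norm_pow, norm_one] at h2
  have hp : ‖q‖ ^ m ≤ 1 := pow_le_one₀ hq0.le hq1.le
  nlinarith [pow_nonneg hq0.le m]

lemma qfac_ne_zero (q : ℂ) (hq0 : 0 < ‖q‖) (hq1 : ‖q‖ < 1) (m : ℕ) :
    qPoch q q m ≠ 0 :=
  qPoch_ne_zero q q m (fun j _ => one_sub_qpow_ne q hq0 hq1 j)

lemma qBinom_zero (q : ℂ) (hq0 : 0 < ‖q‖) (hq1 : ‖q‖ < 1) (k : ℕ) :
    qBinom q k 0 = 1 := by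
  have := qfac_ne_zero q hq0 hq1 k
  simp only [qBinom, qPoch] at *
  simp [div_self this]

lemma qBinom_self (q : ℂ) (hq0 : 0 < ‖q‖) (hq1 : ‖q‖ < 1) (k : ℕ) :
    qBinom q k k = 1 := by
  have := qfac_ne_zero q hq0 hq1 k
  simp only [qBinom, qPoch, Nat.sub_self] at *
  simp [div_self this]

lemma qPascal (q : ℂ) (hq0 : 0 < ‖q‖) (hq1 : ‖q‖ < 1)
    {i k : ℕ} (h : i < k) :
    qBinom q (k+1) (i+1) = q^(i+1) * qBinom q k (i+1) + qBinom q k i := by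
  obtain ⟨s, rfl⟩ : ∃ s, k = i + s + 1 := ⟨k - i - 1, by omega⟩
  have e1 : i + s + 1 + 1 - (i + 1) = s + 1 := by omega
  have e2 : i + s + 1 - (i + 1) = s := by omega
  have e3 : i + s + 1 - i = s + 1 := by omega
  rw [qBinom, qBinom, qBinom, e1, e2, e3]
  have r1 : qPoch q q (i + s + 1 + 1) = qPoch q q (i + s + 1) * (1 - q * q^(i+s+1)) := qPoch_succ _ _ _
  have r2 : qPoch q q (i + 1) = qPoch q q i * (1 - q * q^i) := qPoch_succ _ _ _
  have r3 : qPoch q q (s + 1) = qPoch q q s * (1 - q * q^s) := qPoch_succ _ _ _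
  rw [r1, r2, r3]
  have n1 := qfac_ne_zero q hq0 hq1 i
  have n2 := qfac_ne_zero q hq0 hq1 s
  have n3 := one_sub_qpow_ne q hq0 hq1 i
  have n4 := one_sub_qpow_ne q hq0 hq1 s
  field_simp
  ring

lemma DqIterNum (q a : ℂ) (hq : q ≠ 0) (n : ℕ) :
    ∀ i, i ≤ n → ∀ x : ℂ, x ≠ 0 →
      (Dq q)^[i] (fun t => qPoch q (a*t) n) x
        = (-a)^i * q^(i.choose 2) * (∏ j ∈ Finset.range i, (1 - q^(n-j)))
            * qPoch q (a * q^i * x) (n-i) := by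
  intro i
  induction i with
  | zero => intro _ x _; simp
  | succ i ih =>
    intro hin x hx
    rw [Function.iterate_succ_apply']
    simp only [Dq]
    rw [ih (by omega) x hx, ih (by omega) (q*x) (mul_ne_zero hq hx)]
    obtain ⟨m, hm⟩ : ∃ m, n - i = m + 1 := ⟨n - (i+1), by omega⟩
    have hm' : n - (i+1) = m := by omega
    rw [hm, hm']
    have c1 : qPoch q (a * q^i * x) (m+1) = (1 - a*q^i*x) * qPoch q (a*q^i*x*q) m := qPoch_succ' _ _ _
    have c2 : qPoch q (a * q^i * (q*x)) (m+1) = qPoch q (a*q^i*x*q) m * (1 - a*q^i*x*q*q^m) := by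
      have : a * q^i * (q*x) = a*q^i*x*q := by ring
      rw [this, qPoch_succ]
    rw [c1, c2]
    have c3 : qPoch q (a * q^(i+1) * x) m = qPoch q (a*q^i*x*q) m := by
      congr 1; ring
    rw [c3]
    rw [Finset.prod_range_succ]
    have e1 : (i+1).choose 2 = i.choose 2 + i := by
      rw [Nat.choose_succ_succ]
      simp [Nat.choose_one_right, Nat.add_comm]
    rw [e1, pow_add]
    have e3 : (1:ℂ) - q^(n-i) = 1 - q^m * q := by
      rw [hm, pow_succ]
    rw [e3]
    field_simp
    ring

lemma DqIterDen (q b : ℂ) (hq : q ≠ 0) (m : ℕ) :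
    ∀ j, ∀ x : ℂ, x ≠ 0 → (∀ j' < m + j, 1 - b * q^j' * x ≠ 0) →
      (Dq q)^[j] (fun t => (qPoch q (b*t) m)⁻¹) x
        = b^j * qPoch q (q^m) j / qPoch q (b*x) (m+j) := by
  intro j
  induction j with
  | zero => intro x _ _; simp [qPoch]
  | succ j ih =>
    intro x hx hnz
    rw [Function.iterate_succ_apply']
    simp only [Dq]
    rw [ih x hx (fun j' h => hnz j' (by omega)),
        ih (q*x) (mul_ne_zero hq hx) (by
          intro j' h
          have : b * q^j' * (q*x) = b * q^(j'+1) * x := by ring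
          rw [this]
          exact hnz (j'+1) (by omega))]
    have c1 : qPoch q (b*(q*x)) (m+j) = qPoch q (b*x*q) (m+j) := by congr 1; ring
    have c2 : qPoch q (b*x) (m+j+1) = (1 - b*x) * qPoch q (b*x*q) (m+j) := qPoch_succ' _ _ _
    have c3 : qPoch q (b*x) (m+j+1) = qPoch q (b*x) (m+j) * (1 - b*x*q^(m+j)) := qPoch_succ _ _ _
    have c4 : qPoch q (q^m) (j+1) = qPoch q (q^m) j * (1 - q^m * q^j) := qPoch_succ _ _ _
    have n1 : qPoch q (b*x) (m+j) ≠ 0 := by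
      apply qPoch_ne_zero
      intro j' hj'
      have : 1 - b*x*q^j' = 1 - b*q^j'*x := by ring
      rw [this]; exact hnz j' (by omega)
    have n2 : (1 - b*x) ≠ 0 := by
      have := hnz 0 (by omega); simpa using this
    have n3 : (1 - b*x*q^(m+j)) ≠ 0 := by
      have := hnz (m+j) (by omega)
      have e : 1 - b*x*q^(m+j) = 1 - b*q^(m+j)*x := by ring
      rw [e]; exact this
    have n4 : qPoch q (b*x*q) (m+j) ≠ 0 := by
      intro h0
      have : qPoch q (b*x) (m+j+1) = 0 := by rw [c2, h0]; ring
      rw [c3] at this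
      exact (mul_ne_zero n1 n3) this
    rw [c1, c4]
    have key : qPoch q (b*x) (m+(j+1)) = qPoch q (b*x) (m+j) * (1 - b*x*q^(m+j)) := c3
    rw [key]
    rw [eq_div_iff (by exact mul_ne_zero n1 n3)]
    have hbq : qPoch q (b*x*q) (m+j) = qPoch q (b*x) (m+j) * (1 - b*x*q^(m+j)) / (1-b*x) := by
      rw [← c3, c2]; field_simp
    rw [hbq]
    field_simp
    ring

lemma qLeibniz (q : ℂ) (hq0 : 0 < ‖q‖) (hq1 : ‖q‖ < 1) (f g : ℂ → ℂ) :
    ∀ k, ∀ x : ℂ, x ≠ 0 →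
      (Dq q)^[k] (fun t => f t * g t) x
        = ∑ i ∈ Finset.range (k+1),
            qBinom q k i * (Dq q)^[i] f x * (Dq q)^[k-i] g (q^i * x) := by
  have hq : q ≠ 0 := by
    intro h; rw [h] at hq0; simp at hq0
  intro k
  induction k with
  | zero =>
    intro x _
    simp [qBinom_zero q hq0 hq1 0]
  | succ k ih =>
    intro x hx
    rw [Function.iterate_succ_apply']
    simp only [Dq]
    rw [ih x hx, ih (q*x) (mul_ne_zero hq hx)]
    have step : (∑ i ∈ Finset.range (k+1),
            qBinom q k i * (Dq q)^[i] f x * (Dq q)^[k-i] g (q^i * x)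
          - ∑ i ∈ Finset.range (k+1),
            qBinom q k i * (Dq q)^[i] f (q*x) * (Dq q)^[k-i] g (q^i * (q*x))) / x
        = ∑ i ∈ Finset.range (k+1), qBinom q k i *
            (q^i * ((Dq q)^[i] f x * (Dq q)^[k+1-i] g (q^i * x))
             + (Dq q)^[i+1] f x * (Dq q)^[(k+1)-(i+1)] g (q^(i+1) * x)) := by
      rw [div_eq_iff hx, ← Finset.sum_sub_distrib, Finset.sum_mul]
      apply Finset.sum_congr rfl
      intro i hi
      have hik : i ≤ k := by
        have := Finset.mem_range.mp hi; omega
      have hgi : (Dq q)^[k+1-i] g (q^i * x)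
          = ((Dq q)^[k-i] g (q^i * x) - (Dq q)^[k-i] g (q * (q^i * x))) / (q^i * x) := by
        have e : k + 1 - i = (k - i) + 1 := by omega
        rw [e, Function.iterate_succ_apply']
        simp only [Dq]
      have hfi : (Dq q)^[i+1] f x = ((Dq q)^[i] f x - (Dq q)^[i] f (q*x)) / x := by
        rw [Function.iterate_succ_apply']
        simp only [Dq]
      have ekk : (k+1) - (i+1) = k - i := by omega
      rw [hgi, hfi, ekk]
      have e1 : q * (q^i * x) = q^i * (q*x) := by ring
      have e2 : q^(i+1) * x = q^i * (q*x) := by ring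
      rw [e1, e2]
      have hqix : q^i * x ≠ 0 := mul_ne_zero (pow_ne_zero _ hq) hx
      field_simp
      ring
    rw [step]
    have expand : ∀ i ∈ Finset.range (k+1), qBinom q k i *
            (q^i * ((Dq q)^[i] f x * (Dq q)^[k+1-i] g (q^i * x))
             + (Dq q)^[i+1] f x * (Dq q)^[(k+1)-(i+1)] g (q^(i+1) * x))
        = qBinom q k i * q^i * ((Dq q)^[i] f x * (Dq q)^[k+1-i] g (q^i * x))
          + qBinom q k i * ((Dq q)^[i+1] f x * (Dq q)^[(k+1)-(i+1)] g (q^(i+1) * x)) := by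
      intro i _; ring
    rw [Finset.sum_congr rfl expand, Finset.sum_add_distrib]
    set X : ℕ → ℂ := fun i => (Dq q)^[i] f x * (Dq q)^[k+1-i] g (q^i * x) with hX
    have hX2 : ∀ i ∈ Finset.range (k+1),
        qBinom q k i * ((Dq q)^[i+1] f x * (Dq q)^[(k+1)-(i+1)] g (q^(i+1) * x))
        = qBinom q k i * X (i+1) := by
      intro i _; rfl
    rw [Finset.sum_congr rfl hX2]
    have goalsum : ∑ i ∈ Finset.range (k+2), qBinom q (k+1) i * (Dq q)^[i] f x * (Dq q)^[k+1-i] g (q^i * x)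
        = ∑ i ∈ Finset.range (k+2), qBinom q (k+1) i * X i := by
      apply Finset.sum_congr rfl; intro i _; rw [hX]; ring
    rw [goalsum]
    rw [Finset.sum_range_succ' (fun i => qBinom q (k+1) i * X i) (k+1)]
    rw [Finset.sum_range_succ (fun i => qBinom q (k+1) (i+1) * X (i+1)) k]
    rw [Finset.sum_range_succ' (fun i => qBinom q k i * q^i * X i) k]
    rw [Finset.sum_range_succ (fun i => qBinom q k i * X (i+1)) k]
    rw [qBinom_zero q hq0 hq1 k, qBinom_zero q hq0 hq1 (k+1),
        qBinom_self q hq0 hq1 k, qBinom_self q hq0 hq1 (k+1)]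
    have mid : ∑ i ∈ Finset.range k, qBinom q (k+1) (i+1) * X (i+1)
        = ∑ i ∈ Finset.range k, (qBinom q k (i+1) * q^(i+1) * X (i+1) + qBinom q k i * X (i+1)) := by
      apply Finset.sum_congr rfl
      intro i hi
      rw [qPascal q hq0 hq1 (Finset.mem_range.mp hi)]
      ring
    rw [mid, Finset.sum_add_distrib]
    ring

theorem stmt3 (q a b x : ℂ) (hq0 : 0 < ‖q‖) (hq1 : ‖q‖ < 1)
    (hx : x ≠ 0) (k n : ℕ) (hkn : k ≤ n)
    (ha : ∀ j : ℕ, j < k → 1 - a * q ^ j * x ≠ 0)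
    (hb : ∀ j : ℕ, j < n + k → 1 - b * q ^ j * x ≠ 0) :
    (Dq q)^[k] (fun t => qPoch q (a * t) n / qPoch q (b * t) n) x =
      qPoch q (a * x) n * qPoch q q n /
          (qPoch q (b * x) n * qPoch q (b * q ^ n * x) k) *
        ∑ i ∈ Finset.range (k + 1),
          qBinom q k i * q ^ (i.choose 2) * (-a) ^ i * b ^ (k - i) *
              (qPoch q (b * x) i * qPoch q (q ^ n) (k - i)) /
            (qPoch q q (n - i) * qPoch q (a * x) i) := by
  have hq : q ≠ 0 := by
    intro h; rw [h] at hq0; simp at hq0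
  have hL : (Dq q)^[k] (fun t => qPoch q (a * t) n / qPoch q (b * t) n) x
      = ∑ i ∈ Finset.range (k+1),
          qBinom q k i * (Dq q)^[i] (fun t => qPoch q (a*t) n) x
            * (Dq q)^[k-i] (fun t => (qPoch q (b*t) n)⁻¹) (q^i * x) := by
    have hfun : (fun t => qPoch q (a*t) n / qPoch q (b*t) n)
        = fun t => qPoch q (a*t) n * (qPoch q (b*t) n)⁻¹ :=
      funext fun t => div_eq_mul_inv _ _
    rw [hfun]
    exact qLeibniz q hq0 hq1 _ _ k x hx
  rw [hL, Finset.mul_sum]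
  refine Finset.sum_congr rfl ?_
  intro i hi
  have hik : i ≤ k := by have := Finset.mem_range.mp hi; omega
  rw [DqIterNum q a hq n i (le_trans hik hkn) x hx]
  rw [DqIterDen q b hq n (k-i) (q^i*x) (mul_ne_zero (pow_ne_zero _ hq) hx) (by
    intro j' hj'
    have e : 1 - b * q^j' * (q^i*x) = 1 - b * q^(j'+i) * x := by
      rw [pow_add]; ring
    rw [e]
    exact hb (j'+i) (by omega))]
  -- key product splittings
  have F1 : qPoch q (a*x) n = qPoch q (a*x) i * qPoch q (a*q^i*x) (n-i) := by
    have h := qPoch_add q (a*x) i (n-i)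
    rw [show i + (n-i) = n by omega] at h
    rw [h]
    congr 2
    ring
  have F4 : qPoch q q n = qPoch q q (n-i) * ∏ j ∈ Finset.range i, (1 - q^(n-j)) := by
    have h := qPoch_add q q (n-i) i
    rw [show (n-i) + i = n by omega] at h
    rw [h]
    congr 1
    rw [qPoch, ← Finset.prod_range_reflect (fun j => (1:ℂ) - q^(n-j)) i]
    apply Finset.prod_congr rfl
    intro j hj
    have hj' : j < i := Finset.mem_range.mp hj
    show (1:ℂ) - q * q^(n-i) * q^j = 1 - q^(n-(i-1-j))
    have e2 : q * q^(n-i) * q^j = q^(1 + (n-i) + j) := by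
      rw [pow_add, pow_add, pow_one]
    rw [e2]
    congr 2
    omega
  have F2 : qPoch q (b*x) n * qPoch q (b*q^n*x) k
      = qPoch q (b*x) i * qPoch q (b*(q^i*x)) (n+(k-i)) := by
    have h1 : qPoch q (b*x) (n+k) = qPoch q (b*x) n * qPoch q (b*q^n*x) k := by
      rw [qPoch_add]; congr 2; ring
    have h2 : qPoch q (b*x) (n+k) = qPoch q (b*x) i * qPoch q (b*(q^i*x)) (n+(k-i)) := by
      have h3 := qPoch_add q (b*x) i (n+(k-i))
      rw [show i + (n+(k-i)) = n + k by omega] at h3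
      rw [h3]
      congr 2
      ring
    rw [← h1, h2]
  -- nonvanishing
  have Zai : qPoch q (a*x) i ≠ 0 := by
    apply qPoch_ne_zero
    intro j hj
    have e : 1 - a*x*q^j = 1 - a*q^j*x := by ring
    rw [e]; exact ha j (by omega)
  have Zbi : qPoch q (b*x) i ≠ 0 := by
    apply qPoch_ne_zero
    intro j hj
    have e : 1 - b*x*q^j = 1 - b*q^j*x := by ring
    rw [e]; exact hb j (by omega)
  have Zbig : qPoch q (b*(q^i*x)) (n+(k-i)) ≠ 0 := by
    apply qPoch_ne_zero
    intro j hj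
    have e : 1 - b*(q^i*x)*q^j = 1 - b*q^(i+j)*x := by rw [pow_add]; ring
    rw [e]; exact hb (i+j) (by omega)
  have Zqn : qPoch q q (n-i) ≠ 0 := qfac_ne_zero q hq0 hq1 (n-i)
  rw [F1, F4, F2]
  have Zbi' : qPoch q (x*b) i ≠ 0 := by rw [mul_comm]; exact Zbi
  field_simp
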